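/- For subsets of [n] of fixed size m ordered by elementwise dominance of sorted lists, the single-column rank function S ↦ Σ_{i ∈ S} #{k ≤ i : k ∉ S} is strictly monotone: R ≤ S and R ≠ S imply rank((R)) < rank((S)), and moreover rank is surjective onto {0, 1, ..., rank((S))} on the lower set of S: for every 0 ≤ t ≤ rank((S)) there exists R ≤ S with rank((R)) = t. -/

import Mathlib

open Finset

/-- `colLE R S`: `R ≤ S` for columns, i.e. `|R| = |S|` and the `k`-th least element of `R`
does not exceed the `k`-th least element of `S` for each `k`. -/
def colLE {α : Type*} [LinearOrder α] (R S : Finset α) : Prop :=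
  R.card = S.card ∧
  ∀ (k : ℕ) (hR : k < (R.sort (· ≤ ·)).length) (hS : k < (S.sort (· ≤ ·)).length),
    (R.sort (· ≤ ·)).get ⟨k, hR⟩ ≤ (S.sort (· ≤ ·)).get ⟨k, hS⟩

/-- Rank of a single column `S ⊆ [n] = {1,…,n}`:
`Σ_{i ∈ S} #{k : 1 ≤ k ≤ i, k ∉ S}`. -/
def colRank (S : Finset ℕ) : ℕ :=
  ∑ i ∈ S, ((Finset.Icc 1 i).filter (fun k => k ∉ S)).card

/-! ### Auxiliary lemmas -/

lemma getD_eq_get (l : List ℕ) (k : ℕ) (h : k < l.length) : l.getD k 0 = l.get ⟨k, h⟩ := by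
  rw [List.getD_eq_getElem _ _ h]
  exact (List.get_eq_getElem (l := l) (i := ⟨k, h⟩)).symm

lemma sl_lt (S : Finset ℕ) {i j : ℕ} (hi : i < (S.sort (· ≤ ·)).length)
    (hj : j < (S.sort (· ≤ ·)).length) (hij : i < j) :
    (S.sort (· ≤ ·)).get ⟨i, hi⟩ < (S.sort (· ≤ ·)).get ⟨j, hj⟩ :=
  List.pairwise_iff_get.1 ((Finset.sortedLT_sort S).pairwise) ⟨i, hi⟩ ⟨j, hj⟩ hij

lemma sl_lt' (S : Finset ℕ) {i j : ℕ} (hj : j < (S.sort (· ≤ ·)).length) (hij : i < j) :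
    (S.sort (· ≤ ·)).getD i 0 < (S.sort (· ≤ ·)).getD j 0 := by
  have hi : i < (S.sort (· ≤ ·)).length := by omega
  rw [getD_eq_get _ _ hi, getD_eq_get _ _ hj]
  exact sl_lt S hi hj hij

lemma sl_ge {n : ℕ} {S : Finset ℕ} (hsub : S ⊆ Finset.Icc 1 n) :
    ∀ j (h : j < (S.sort (· ≤ ·)).length), j + 1 ≤ (S.sort (· ≤ ·)).get ⟨j, h⟩ := by
  intro j
  induction j with
  | zero =>
    intro h
    have hmem : (S.sort (· ≤ ·)).get ⟨0, h⟩ ∈ S :=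
      (Finset.mem_sort _).1 (List.get_mem _ _)
    have := Finset.mem_Icc.1 (hsub hmem)
    omega
  | succ j ih =>
    intro h
    have hj : j < (S.sort (· ≤ ·)).length := Nat.lt_of_succ_lt h
    have h1 := ih hj
    have h2 := sl_lt S hj h (Nat.lt_succ_self j)
    omega

lemma sl_ge' {n : ℕ} {S : Finset ℕ} (hsub : S ⊆ Finset.Icc 1 n)
    {j : ℕ} (h : j < (S.sort (· ≤ ·)).length) :
    j + 1 ≤ (S.sort (· ≤ ·)).getD j 0 := by
  rw [getD_eq_get _ _ h]
  exact sl_ge hsub j h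

lemma sl_mem (S : Finset ℕ) {j : ℕ} (h : j < (S.sort (· ≤ ·)).length) :
    (S.sort (· ≤ ·)).getD j 0 ∈ S := by
  rw [getD_eq_get _ _ h]
  exact (Finset.mem_sort _).1 (List.get_mem _ _)

lemma count_le (S : Finset ℕ) {j : ℕ} (h : j < (S.sort (· ≤ ·)).length) :
    (S.filter (· ≤ (S.sort (· ≤ ·)).get ⟨j, h⟩)).card = j + 1 := by
  have key : (Finset.range (j + 1)).card
      = (S.filter (· ≤ (S.sort (· ≤ ·)).get ⟨j, h⟩)).card := by
    apply Finset.card_bij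
      (fun i hi => (S.sort (· ≤ ·)).get ⟨i, by
        have : i < j + 1 := Finset.mem_range.1 hi; omega⟩)
    · intro a ha
      have haj : a < j + 1 := Finset.mem_range.1 ha
      have halen : a < (S.sort (· ≤ ·)).length := by omega
      refine Finset.mem_filter.2 ⟨(Finset.mem_sort _).1 (List.get_mem _ _), ?_⟩
      rcases Nat.lt_or_ge a j with hlt | hge
      · exact le_of_lt (sl_lt S halen h hlt)
      · have : a = j := by omega
        subst this
        exact le_refl _
    · intro a1 ha1 a2 ha2 heq
      have hnd : (S.sort (· ≤ ·)).Nodup := Finset.sort_nodup _ _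
      exact congrArg Fin.val (hnd.get_inj_iff.1 heq)
    · intro b hb
      obtain ⟨hbS, hble⟩ := Finset.mem_filter.1 hb
      obtain ⟨i, hi⟩ := List.mem_iff_get.1 ((Finset.mem_sort (α := ℕ) (· ≤ ·)).2 hbS)
      have hij : (i : ℕ) < j + 1 := by
        by_contra hc
        have := sl_lt S h i.isLt (by omega)
        rw [hi] at this
        omega
      exact ⟨i, Finset.mem_range.2 hij, by rw [← hi]⟩
  rw [← key, Finset.card_range]

lemma colRank_eq {n : ℕ} {S : Finset ℕ} (hsub : S ⊆ Finset.Icc 1 n) :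
    colRank S = ∑ j ∈ Finset.range S.card, ((S.sort (· ≤ ·)).getD j 0 - (j + 1)) := by
  have hls : (S.sort (· ≤ ·)).length = S.card := Finset.length_sort _
  unfold colRank
  symm
  apply Finset.sum_bij
    (fun j hj => (S.sort (· ≤ ·)).get ⟨j, by
      have : j < S.card := Finset.mem_range.1 hj; omega⟩)
  · intro a _
    exact (Finset.mem_sort _).1 (List.get_mem _ _)
  · intro a1 ha1 a2 ha2 heq
    have hnd : (S.sort (· ≤ ·)).Nodup := Finset.sort_nodup _ _
    exact congrArg Fin.val (hnd.get_inj_iff.1 heq)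
  · intro b hb
    obtain ⟨i, hi⟩ := List.mem_iff_get.1 ((Finset.mem_sort (α := ℕ) (· ≤ ·)).2 hb)
    have hiv := i.isLt
    refine ⟨i, Finset.mem_range.2 (by omega), ?_⟩
    rw [← hi]
  · intro j hj
    have hjlen : j < (S.sort (· ≤ ·)).length := by
      have : j < S.card := Finset.mem_range.1 hj; omega
    set a := (S.sort (· ≤ ·)).get ⟨j, hjlen⟩ with ha
    have hfil : (Finset.Icc 1 a).filter (fun k => k ∈ S) = S.filter (· ≤ a) := by
      ext x
      simp only [Finset.mem_filter, Finset.mem_Icc]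
      constructor
      · rintro ⟨⟨_, h2⟩, h3⟩; exact ⟨h3, h2⟩
      · rintro ⟨h1, h2⟩
        exact ⟨⟨(Finset.mem_Icc.1 (hsub h1)).1, h2⟩, h1⟩
    have hcount : ((Finset.Icc 1 a).filter (fun k => k ∈ S)).card = j + 1 := by
      rw [hfil, count_le S hjlen]
    have hnot : ((Finset.Icc 1 a).filter (fun k => k ∉ S)).card = a - (j + 1) := by
      rw [Finset.filter_not, Finset.card_sdiff_of_subset (Finset.filter_subset _ _), hcount,
        Nat.card_Icc]
      omega
    rw [List.getD_eq_getElem _ _ hjlen]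
    rw [hnot]
    rfl

lemma colLE_refl (S : Finset ℕ) : colLE S S :=
  ⟨rfl, fun _ _ _ => le_refl _⟩

lemma colLE_trans {A B C : Finset ℕ} (h1 : colLE A B) (h2 : colLE B C) : colLE A C := by
  obtain ⟨c1, p1⟩ := h1
  obtain ⟨c2, p2⟩ := h2
  refine ⟨c1.trans c2, fun k hA hC => ?_⟩
  have hB : k < (B.sort (· ≤ ·)).length := by
    rw [Finset.length_sort] at hA ⊢
    omega
  exact le_trans (p1 k hA hB) (p2 k hB hC)

lemma part1 {n : ℕ} {S : Finset ℕ} (hsub : S ⊆ Finset.Icc 1 n)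
    {R : Finset ℕ} (hRsub : R ⊆ Finset.Icc 1 n) (hle : colLE R S) (hne : R ≠ S) :
    colRank R < colRank S := by
  obtain ⟨hcard, hpt⟩ := hle
  have hlsR : (R.sort (· ≤ ·)).length = R.card := Finset.length_sort _
  have hlsS : (S.sort (· ≤ ·)).length = S.card := Finset.length_sort _
  have hlen : (R.sort (· ≤ ·)).length = (S.sort (· ≤ ·)).length := by omega
  rw [colRank_eq hRsub, colRank_eq hsub, hcard]
  apply Finset.sum_lt_sum
  · intro j hj
    have hS : j < (S.sort (· ≤ ·)).length := by
      have := Finset.mem_range.1 hj; omega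
    have hR : j < (R.sort (· ≤ ·)).length := by omega
    have h := hpt j hR hS
    rw [← getD_eq_get _ _ hR, ← getD_eq_get _ _ hS] at h
    exact Nat.sub_le_sub_right h _
  · have hsne : R.sort (· ≤ ·) ≠ S.sort (· ≤ ·) := by
      intro hEq
      apply hne
      rw [← Finset.sort_toFinset R (· ≤ ·), hEq, Finset.sort_toFinset]
    obtain ⟨j, hjR, hjne⟩ : ∃ j, ∃ hj : j < (R.sort (· ≤ ·)).length,
        (R.sort (· ≤ ·)).get ⟨j, hj⟩ ≠ (S.sort (· ≤ ·)).get ⟨j, by omega⟩ := by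
      by_contra hc
      push_neg at hc
      apply hsne
      apply List.ext_getElem hlen
      intro i h1 h2
      have := hc i h1
      simpa [List.get_eq_getElem] using this
    have hS : j < (S.sort (· ≤ ·)).length := by omega
    have hlt : (R.sort (· ≤ ·)).getD j 0 < (S.sort (· ≤ ·)).getD j 0 := by
      rw [getD_eq_get _ _ hjR, getD_eq_get _ _ hS]
      exact lt_of_le_of_ne (hpt j hjR hS) hjne
    have hge : j + 1 ≤ (R.sort (· ≤ ·)).getD j 0 := sl_ge' hRsub hjR
    refine ⟨j, Finset.mem_range.2 (by omega), ?_⟩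
    omega

lemma step {n : ℕ} {S : Finset ℕ} (hsub : S ⊆ Finset.Icc 1 n) (hpos : 0 < colRank S) :
    ∃ S', S' ⊆ Finset.Icc 1 n ∧ colLE S' S ∧ colRank S' + 1 = colRank S := by
  classical
  have hls : (S.sort (· ≤ ·)).length = S.card := Finset.length_sort _
  have hex : ∃ j, j < (S.sort (· ≤ ·)).length ∧ j + 1 < (S.sort (· ≤ ·)).getD j 0 := by
    by_contra hc
    push_neg at hc
    have hz : colRank S = 0 := by
      rw [colRank_eq hsub]
      apply Finset.sum_eq_zero
      intro k hk
      have hklen : k < (S.sort (· ≤ ·)).length := by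
        have := Finset.mem_range.1 hk; omega
      have h1 := hc k hklen
      have h2 : k + 1 ≤ (S.sort (· ≤ ·)).getD k 0 := sl_ge' hsub hklen
      omega
    omega
  obtain ⟨j, hjm, hjlt, hmin⟩ : ∃ j, j < (S.sort (· ≤ ·)).length ∧
      j + 1 < (S.sort (· ≤ ·)).getD j 0 ∧
      ∀ i < j, ¬(i < (S.sort (· ≤ ·)).length ∧ i + 1 < (S.sort (· ≤ ·)).getD i 0) :=
    ⟨Nat.find hex, (Nat.find_spec hex).1, (Nat.find_spec hex).2,
      fun i hij => Nat.find_min hex hij⟩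
  have hprev : ∀ i < j, (S.sort (· ≤ ·)).getD i 0 = i + 1 := by
    intro i hij
    have hilen : i < (S.sort (· ≤ ·)).length := by omega
    have h2 : i + 1 ≤ (S.sort (· ≤ ·)).getD i 0 := sl_ge' hsub hilen
    have h3 : ¬ (i + 1 < (S.sort (· ≤ ·)).getD i 0) :=
      fun hcon => hmin i hij ⟨hilen, hcon⟩
    omega
  set a := (S.sort (· ≤ ·)).getD j 0 - 1 with ha
  have hlen' : ((S.sort (· ≤ ·)).set j a).length = (S.sort (· ≤ ·)).length :=
    List.length_set
  have hget' : ∀ k, k < (S.sort (· ≤ ·)).length →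
      ((S.sort (· ≤ ·)).set j a).getD k 0
        = if j = k then a else (S.sort (· ≤ ·)).getD k 0 := by
    intro k hk
    have hk' : k < ((S.sort (· ≤ ·)).set j a).length := by omega
    rw [List.getD_eq_getElem _ _ hk', List.getElem_set, List.getD_eq_getElem _ _ hk]
  have sorted' : ((S.sort (· ≤ ·)).set j a).Pairwise (· < ·) := by
    rw [List.pairwise_iff_get]
    rintro ⟨p, hp⟩ ⟨q, hq⟩ hpq
    have hpq' : p < q := hpq
    have hplen : p < (S.sort (· ≤ ·)).length := by omega
    have hqlen : q < (S.sort (· ≤ ·)).length := by omega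
    rw [← getD_eq_get _ _ hp, ← getD_eq_get _ _ hq, hget' p hplen, hget' q hqlen]
    by_cases h1 : j = p <;> by_cases h2 : j = q
    · exfalso; omega
    · rw [if_pos h1, if_neg h2]
      have hjq : (S.sort (· ≤ ·)).getD j 0 < (S.sort (· ≤ ·)).getD q 0 :=
        sl_lt' S hqlen (by omega)
      omega
    · rw [if_neg h1, if_pos h2]
      have hpj : p < j := by omega
      have := hprev p hpj
      omega
    · rw [if_neg h1, if_neg h2]
      exact sl_lt' S hqlen hpq'
  have nodup' : ((S.sort (· ≤ ·)).set j a).Nodup := sorted'.nodup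
  have sortedle' : ((S.sort (· ≤ ·)).set j a).Pairwise (· ≤ ·) := sorted'.imp le_of_lt
  set S' := ((S.sort (· ≤ ·)).set j a).toFinset with hS'
  have hFS : Finset.sort S' (· ≤ ·) = (S.sort (· ≤ ·)).set j a := by
    rw [hS']
    exact (List.toFinset_sort _ nodup').2 sortedle'
  have hcard' : S'.card = S.card := by
    rw [hS', List.toFinset_card_of_nodup nodup', List.length_set, hls]
  have hmemj : (S.sort (· ≤ ·)).getD j 0 ∈ S := sl_mem S hjm
  have hjn := Finset.mem_Icc.1 (hsub hmemj)
  have hS'sub : S' ⊆ Finset.Icc 1 n := by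
    intro x hx
    rw [hS', List.mem_toFinset] at hx
    obtain ⟨⟨i, hilt⟩, hi⟩ := List.mem_iff_get.1 hx
    have hilen : i < (S.sort (· ≤ ·)).length := by omega
    rw [← getD_eq_get _ _ hilt, hget' i hilen] at hi
    by_cases hij : j = i
    · rw [if_pos hij] at hi
      rw [Finset.mem_Icc, ← hi]
      omega
    · rw [if_neg hij] at hi
      rw [← hi]
      exact hsub (sl_mem S hilen)
  refine ⟨S', hS'sub, ⟨hcard', ?_⟩, ?_⟩
  · intro k hR hSk
    rw [← getD_eq_get _ _ hR, ← getD_eq_get _ _ hSk, hFS, hget' k hSk]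
    by_cases hjk : j = k
    · rw [if_pos hjk]
      have : a ≤ (S.sort (· ≤ ·)).getD j 0 := by omega
      rw [hjk] at this
      exact this
    · rw [if_neg hjk]
  · rw [colRank_eq hS'sub, colRank_eq hsub, hcard']
    have hjmem : j ∈ Finset.range S.card := Finset.mem_range.2 (by omega)
    rw [← Finset.add_sum_erase _ _ hjmem, ← Finset.add_sum_erase _ _ hjmem]
    have hrest : ∀ k ∈ (Finset.range S.card).erase j,
        (Finset.sort S' (· ≤ ·)).getD k 0 - (k + 1)
          = (S.sort (· ≤ ·)).getD k 0 - (k + 1) := by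
      intro k hk
      obtain ⟨hkj, hkr⟩ := Finset.mem_erase.1 hk
      have hklen : k < (S.sort (· ≤ ·)).length := by
        have := Finset.mem_range.1 hkr; omega
      rw [hFS, hget' k hklen, if_neg (fun h => hkj h.symm)]
    rw [Finset.sum_congr rfl hrest]
    have h1 : (Finset.sort S' (· ≤ ·)).getD j 0 = a := by
      rw [hFS, hget' j hjm, if_pos rfl]
    rw [h1]
    omega

lemma part2 (n : ℕ) : ∀ d (S : Finset ℕ), S ⊆ Finset.Icc 1 n → colRank S = d →
    ∀ t ≤ d, ∃ R, R ⊆ Finset.Icc 1 n ∧ colLE R S ∧ colRank R = t := by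
  intro d
  induction d with
  | zero =>
    intro S hsub hrk t ht
    exact ⟨S, hsub, colLE_refl S, by omega⟩
  | succ d ih =>
    intro S hsub hrk t ht
    rcases eq_or_lt_of_le ht with rfl | ht'
    · exact ⟨S, hsub, colLE_refl S, hrk⟩
    · obtain ⟨S', h1, h2, h3⟩ := step hsub (by omega)
      obtain ⟨R, hr1, hr2, hr3⟩ := ih S' h1 (by omega) t (by omega)
      exact ⟨R, hr1, colLE_trans hr2 h2, hr3⟩

/-- The single-column rank function is strictly monotone on the dominance order, and on
the lower set of `S` it attains every value `t` with `0 ≤ t ≤ rank((S))`. -/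
theorem stmt_19 (n : ℕ) (S : Finset ℕ) (hsub : S ⊆ Finset.Icc 1 n) :
    (∀ R : Finset ℕ, R ⊆ Finset.Icc 1 n → colLE R S → R ≠ S →
      colRank R < colRank S) ∧
    (∀ t ≤ colRank S, ∃ R : Finset ℕ,
      R ⊆ Finset.Icc 1 n ∧ colLE R S ∧ colRank R = t) := by
  constructor
  · intro R hRsub hle hne
    exact part1 hsub hRsub hle hne
  · intro t ht
    exact part2 n (colRank S) S hsub rfl t ht
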